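/- Along solutions of the closed-loop 3D pendulum dynamics J Ω̇ = -Ω × JΩ - k_R e_R - k_Ω Ω, Ṙ = R Ω̂, the Lyapunov function V = ½ Ω·JΩ + k_R Ψ(R, R_d) satisfies dV/dt = -k_Ω ‖Ω‖². -/

import Mathlib

open Matrix

/-- `R ∈ SO(3)`: rotation matrices. -/
def SO3 (R : Matrix (Fin 3) (Fin 3) ℝ) : Prop := Rᵀ * R = 1 ∧ R.det = 1

/-- The hat map: `hat x` is the skew-symmetric matrix with `(hat x).mulVec y = x × y`. -/
def hat (x : Fin 3 → ℝ) : Matrix (Fin 3) (Fin 3) ℝ :=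
  !![0, -x 2, x 1; x 2, 0, -x 0; -x 1, x 0, 0]

/-- The vee map, inverse of the hat map on skew-symmetric matrices. -/
def vee (S : Matrix (Fin 3) (Fin 3) ℝ) : Fin 3 → ℝ := ![S 2 1, S 0 2, S 1 0]

set_option maxHeartbeats 2000000 in
/-- Along solutions of the closed-loop 3D pendulum dynamics
`J Ω̇ = -Ω × JΩ - k_R e_R - k_Ω Ω`, `Ṙ = R Ω̂`, the Lyapunov function
`V = ½ Ω⬝JΩ + k_R Ψ(R, R_d)` satisfies `dV/dt = -k_Ω ‖Ω‖²`. -/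
theorem attitude_lyapunov_decay
    (J : Matrix (Fin 3) (Fin 3) ℝ) (hJ : J.PosDef)
    (Rd : Matrix (Fin 3) (Fin 3) ℝ) (hRd : SO3 Rd)
    (g : Fin 3 → ℝ) (hg : ∀ i, 0 < g i)
    (kR kΩ : ℝ) (hkR : 0 < kR) (hkΩ : 0 < kΩ)
    (R : ℝ → Matrix (Fin 3) (Fin 3) ℝ) (Ω Ω' : ℝ → Fin 3 → ℝ)
    (hSO3 : ∀ t : ℝ, SO3 (R t))
    (hR : ∀ t : ℝ, ∀ i j : Fin 3, HasDerivAt (fun s => R s i j) ((R t * hat (Ω t)) i j) t)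
    (hΩ : ∀ t : ℝ, HasDerivAt Ω (Ω' t) t)
    (hdyn : ∀ t : ℝ, J.mulVec (Ω' t)
      = -(crossProduct (Ω t) (J.mulVec (Ω t)))
        - kR • (fun k => (1 / 2 : ℝ) *
            vee (diagonal g * Rdᵀ * R t - (R t)ᵀ * Rd * diagonal g) k)
        - kΩ • Ω t) :
    ∀ t : ℝ,
      HasDerivAt
        (fun s => (1 / 2 : ℝ) * (Ω s ⬝ᵥ J.mulVec (Ω s))
          + kR * ((1 / 2 : ℝ) *
              (((1 : Matrix (Fin 3) (Fin 3) ℝ) - Rdᵀ * R s) * diagonal g).trace))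
        (-(kΩ * (Ω t ⬝ᵥ Ω t))) t := by
  intro t
  have hJsym : ∀ i j, J i j = J j i := fun i j => by
    have := congrFun (congrFun hJ.1 j) i; simpa using this
  have hΩi : ∀ i, HasDerivAt (fun s => Ω s i) (Ω' t i) t :=
    fun i => (hasDerivAt_pi.mp (hΩ t)) i
  obtain ⟨M, hM⟩ : ∃ M, M = R t * hat (Ω t) := ⟨_, rfl⟩
  have hRt : ∀ k i : Fin 3, HasDerivAt (fun s => R s k i) (M k i) t := by
    intro k i; rw [hM]; exact hR t k i
  have hA : HasDerivAt (fun s => Ω s ⬝ᵥ J.mulVec (Ω s))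
      (Ω' t ⬝ᵥ J.mulVec (Ω t) + Ω t ⬝ᵥ J.mulVec (Ω' t)) t := by
    have h := HasDerivAt.fun_sum (fun i (_ : i ∈ Finset.univ) =>
      ((hΩi i).mul (HasDerivAt.fun_sum fun j (_ : j ∈ Finset.univ) =>
        HasDerivAt.const_mul (J i j) (hΩi j))))
    simp only [Matrix.mulVec, dotProduct]
    convert h using 1
    · rfl
    · rfl
    · rfl
    rw [Finset.sum_add_distrib]
  have hB : HasDerivAt
      (fun s => (((1 : Matrix (Fin 3) (Fin 3) ℝ) - Rdᵀ * R s) * diagonal g).trace)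
      (∑ i, (0 - ∑ k, Rdᵀ i k * M k i) * g i) t := by
    have h := HasDerivAt.fun_sum (fun i (_ : i ∈ Finset.univ) =>
      HasDerivAt.mul_const
        ((hasDerivAt_const t ((1 : Matrix (Fin 3) (Fin 3) ℝ) i i)).sub
          (HasDerivAt.fun_sum fun k (_ : k ∈ Finset.univ) =>
            HasDerivAt.const_mul (Rdᵀ i k) (hRt k i))) (g i))
    simp only [Matrix.trace, Matrix.diag, Matrix.mul_diagonal, Matrix.sub_apply]
    simp only [Matrix.mul_apply]
    convert h using 2
    all_goals rfl
  have htot := (HasDerivAt.const_mul (1 / 2 : ℝ) hA).fun_add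
    (HasDerivAt.const_mul kR (HasDerivAt.const_mul (1 / 2 : ℝ) hB))
  convert htot using 1
  · rfl
  · rfl
  have key : Ω' t ⬝ᵥ J.mulVec (Ω t) = Ω t ⬝ᵥ J.mulVec (Ω' t) := by
    simp only [Matrix.mulVec, dotProduct, Fin.sum_univ_three]
    linear_combination (Ω' t 0 * Ω t 1 - Ω t 0 * Ω' t 1) * hJsym 0 1
      + (Ω' t 0 * Ω t 2 - Ω t 0 * Ω' t 2) * hJsym 0 2
      + (Ω' t 1 * Ω t 2 - Ω t 1 * Ω' t 2) * hJsym 1 2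
  rw [key, hdyn t, hM]
  simp [Matrix.mulVec, dotProduct, Matrix.mul_apply, Matrix.transpose_apply,
    cross_apply, vee, hat, Matrix.diagonal_mul, Matrix.mul_diagonal, Pi.sub_apply,
    Pi.neg_apply, Pi.smul_apply, smul_eq_mul, Matrix.sub_apply, Fin.sum_univ_three,
    Matrix.cons_val_zero, Matrix.cons_val_one, Matrix.head_cons, Matrix.cons_val_two,
    Matrix.tail_cons, Matrix.diagonal_apply, Fin.isValue, Matrix.vecHead, Matrix.vecTail,
    Function.comp_apply, Matrix.cons_val_succ]
  ring
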